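/- arXiv:2502.01409 — 5 statements merged into one kernel-verified Lean document; each statement's English description precedes it below -/
import Mathlib

section
/- If {a_1, ..., a_r} is a set of distinct positive integers none of which is divisible by 3, with 1/a_1 + ... + 1/a_r = 1, then a_1 + ... + a_r ≡ 1 (mod 3). -/
lemma zmod3_sq_eq_one : ∀ x : ZMod 3, x ≠ 0 → x * x = 1 := by decide

theorem three_free_one_partition_sum_mod_three (A : Finset ℕ)
    (hpos : ∀ a ∈ A, 0 < a) (hfree : ∀ a ∈ A, ¬ (3 ∣ a))
    (hrecip : ∑ a ∈ A, (1 : ℚ) / a = 1) :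
    (∑ a ∈ A, a) % 3 = 1 := by
  haveI : Fact (Nat.Prime 3) := ⟨by norm_num⟩
  have hsq : ∀ a ∈ A, (a : ZMod 3) * a = 1 := by
    intro a ha
    have hne : (a : ZMod 3) ≠ 0 := by
      rw [Ne, ZMod.natCast_eq_zero_iff]
      exact hfree a ha
    exact zmod3_sq_eq_one _ hne
  have hnat : (∑ a ∈ A, ∏ b ∈ A.erase a, b) = ∏ a ∈ A, a := by
    have hq : (∑ a ∈ A, ∏ b ∈ A.erase a, (b : ℚ)) = ∏ a ∈ A, (a : ℚ) := by
      have h := congrArg (· * ∏ a ∈ A, (a : ℚ)) hrecip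
      simp only [Finset.sum_mul, one_mul] at h
      rw [← h]
      refine Finset.sum_congr rfl fun a ha => ?_
      have ha0 : (a : ℚ) ≠ 0 := Nat.cast_ne_zero.mpr (hpos a ha).ne'
      rw [← Finset.mul_prod_erase A _ ha]
      field_simp
    have := @Nat.cast_inj ℚ _ _
    rw [← this]
    push_cast
    exact hq
  have h3 : ((∑ a ∈ A, a : ℕ) : ZMod 3) = 1 := by
    have hz := congrArg (Nat.cast : ℕ → ZMod 3) hnat
    push_cast at hz
    have hP : (∏ a ∈ A, (a : ZMod 3)) ≠ 0 := by
      rw [Finset.prod_ne_zero_iff]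
      intro a ha h
      have := hsq a ha
      rw [h, mul_zero] at this
      exact zero_ne_one this
    have hz2 : (∑ a ∈ A, (a : ZMod 3)) * ∏ a ∈ A, (a : ZMod 3)
        = ∏ a ∈ A, (a : ZMod 3) := by
      have step : (∑ a ∈ A, (a : ZMod 3)) * ∏ a ∈ A, (a : ZMod 3)
          = ∑ a ∈ A, ∏ b ∈ A.erase a, (b : ZMod 3) := by
        rw [Finset.sum_mul]
        refine Finset.sum_congr rfl fun a ha => ?_
        rw [← Finset.mul_prod_erase A _ ha, ← mul_assoc, hsq a ha, one_mul]
      rw [step, hz]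
    have := mul_right_cancel₀ hP (hz2.trans (one_mul _).symm)
    push_cast
    exact this
  have := (ZMod.natCast_eq_natCast_iff _ _ _).mp (h3.trans (Nat.cast_one (R := ZMod 3)).symm)
  simpa [Nat.ModEq] using this
end

section
/- If {a_1, ..., a_r} is a set of distinct odd positive integers with 1/a_1 + ... + 1/a_r = 1, then a_1 + ... + a_r ≡ 1 (mod 8). -/
lemma odd_sq_zmod8 (a : ℕ) (h : Odd a) : (a : ZMod 8) ^ 2 = 1 := by
  have h2 : a % 2 = 1 := Nat.odd_iff.mp h
  have h8 : a % 8 = 1 ∨ a % 8 = 3 ∨ a % 8 = 5 ∨ a % 8 = 7 := by omega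
  have : ((a % 8 : ℕ) : ZMod 8) = (a : ZMod 8) := ZMod.natCast_mod a 8
  rcases h8 with h | h | h | h <;> rw [← this, h] <;> decide

theorem odd_one_partition_sum_mod_eight (A : Finset ℕ)
    (hpos : ∀ a ∈ A, 0 < a) (hodd : ∀ a ∈ A, Odd a)
    (hrecip : ∑ a ∈ A, (1 : ℚ) / a = 1) :
    (∑ a ∈ A, a) % 8 = 1 := by
  set N : ℕ := ∏ a ∈ A, a with hN
  have hNodd : Odd N := Finset.prod_induction _ Odd (fun _ _ => Odd.mul) odd_one hodd
  have hdvd : ∀ a ∈ A, a ∣ N := fun a ha => Finset.dvd_prod_of_mem _ ha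
  -- sum of N/a equals N in ℕ
  have hsum : ∑ a ∈ A, N / a = N := by
    have hcast : ((∑ a ∈ A, N / a : ℕ) : ℚ) = ∑ a ∈ A, (N : ℚ) / a := by
      push_cast
      refine Finset.sum_congr rfl fun a ha => ?_
      exact Nat.cast_div (hdvd a ha) (by exact_mod_cast (hpos a ha).ne')
    have : ∑ a ∈ A, (N : ℚ) / a = N := by
      rw [show ∑ a ∈ A, (N : ℚ) / a = (N : ℚ) * ∑ a ∈ A, (1 : ℚ) / a by
        rw [Finset.mul_sum]; exact Finset.sum_congr rfl fun a _ => by ring]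
      rw [hrecip, mul_one]
    exact_mod_cast hcast.trans this
  -- pass to ZMod 8
  have heach : ∀ a ∈ A, ((N / a : ℕ) : ZMod 8) = (N : ZMod 8) * a := by
    intro a ha
    have hmul : (N / a) * a = N := Nat.div_mul_cancel (hdvd a ha)
    have hsq := odd_sq_zmod8 a (hodd a ha)
    calc ((N / a : ℕ) : ZMod 8) = ((N / a : ℕ) : ZMod 8) * ((a : ZMod 8) ^ 2) := by
          rw [hsq, mul_one]
      _ = (((N / a) * a : ℕ) : ZMod 8) * a := by push_cast; ring
      _ = (N : ZMod 8) * a := by rw [hmul]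
  have key : ((N : ZMod 8)) * (∑ a ∈ A, (a : ZMod 8)) = (N : ZMod 8) := by
    have hc := congrArg (fun n : ℕ => (n : ZMod 8)) hsum
    simp only [Nat.cast_sum] at hc
    rw [Finset.mul_sum, ← Finset.sum_congr rfl heach, hc]
  have hNsq : (N : ZMod 8) ^ 2 = 1 := odd_sq_zmod8 N hNodd
  have hfin : ((∑ a ∈ A, a : ℕ) : ZMod 8) = ((1 : ℕ) : ZMod 8) := by
    push_cast
    calc (∑ a ∈ A, (a : ZMod 8)) = (N : ZMod 8) ^ 2 * ∑ a ∈ A, (a : ZMod 8) := by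
          rw [hNsq, one_mul]
      _ = (N : ZMod 8) * ((N : ZMod 8) * ∑ a ∈ A, (a : ZMod 8)) := by ring
      _ = (N : ZMod 8) ^ 2 := by rw [key]; ring
      _ = 1 := hNsq
  have := (ZMod.natCast_eq_natCast_iff _ _ _).mp hfin
  simpa [Nat.ModEq] using this
end

section
/- Let α be a positive rational and {a_1, ..., a_r} distinct positive integers none divisible by 3, with 1/a_1 + ... + 1/a_r = α and a_1 + ... + a_r = n. Write α = p/q in lowest terms; then 3 does not divide q and n·q ≡ p (mod 3). -/
theorem three_free_alpha_partition_mod_three (α : ℚ) (hα : 0 < α)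
    (A : Finset ℕ) (n : ℕ)
    (hpos : ∀ a ∈ A, 0 < a) (hfree : ∀ a ∈ A, ¬ (3 ∣ a))
    (hrecip : ∑ a ∈ A, (1 : ℚ) / a = α)
    (hsum : ∑ a ∈ A, a = n) :
    ¬ (3 ∣ α.den) ∧ (n * α.den : ℤ) ≡ α.num [ZMOD 3] := by
  set D : ℕ := ∏ a ∈ A, a with hD
  have hD3 : ¬ (3 ∣ D) := by
    intro h
    rcases (Prime.dvd_finset_prod_iff Nat.prime_three.prime _).mp h with ⟨a, ha, hdvd⟩
    exact hfree a ha hdvd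
  have hDpos : 0 < D := Finset.prod_pos hpos
  set S : ℕ := ∑ a ∈ A, D / a with hS
  have key : α * (D : ℚ) = (S : ℚ) := by
    rw [hS, Nat.cast_sum, ← hrecip, Finset.sum_mul]
    apply Finset.sum_congr rfl
    intro a ha
    have haD : a ∣ D := Finset.dvd_prod_of_mem _ ha
    have ha0 : (a : ℚ) ≠ 0 := by exact_mod_cast (hpos a ha).ne'
    rw [Nat.cast_div haD ha0, one_div, inv_mul_eq_div]
  have hDQ : (D : ℚ) ≠ 0 := by exact_mod_cast hDpos.ne'
  have hαeq : α = ((S : ℤ) : ℚ) / ((D : ℤ) : ℚ) := by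
    field_simp
    push_cast
    linarith [key]
  have hdenD : (α.den : ℤ) ∣ (D : ℤ) := by
    rw [hαeq, ← Rat.divInt_eq_div]
    exact Rat.den_dvd _ _
  have hden3 : ¬ (3 ∣ α.den) := by
    intro h
    exact hD3 (dvd_trans (by exact_mod_cast h) (by exact_mod_cast hdenD))
  refine ⟨hden3, ?_⟩
  -- integer identity: α.num * D = S * α.den
  have hint : α.num * (D : ℤ) = (S : ℤ) * (α.den : ℤ) := by
    have h1 : (α.num : ℚ) * D = (S : ℚ) * (α.den : ℚ) := by
      rw [← Rat.mul_den_eq_num]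
      rw [mul_comm α _, mul_assoc, key]
      ring
    exact_mod_cast h1
  -- now work in ZMod 3
  have hsq : ∀ x : ZMod 3, x ≠ 0 → x * x = 1 := by decide
  have hDz : (D : ZMod 3) ≠ 0 := by
    simpa [ZMod.natCast_eq_zero_iff] using hD3
  have hSz : (S : ZMod 3) = (D : ZMod 3) * (n : ZMod 3) := by
    rw [hS, Nat.cast_sum, ← hsum, Nat.cast_sum, Finset.mul_sum]
    apply Finset.sum_congr rfl
    intro a ha
    have haD : a ∣ D := Finset.dvd_prod_of_mem _ ha
    have ha0 : (a : ZMod 3) ≠ 0 := by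
      simpa [ZMod.natCast_eq_zero_iff] using hfree a ha
    have h1 : ((D / a : ℕ) : ZMod 3) * (a : ZMod 3) = (D : ZMod 3) := by
      rw [← Nat.cast_mul, Nat.div_mul_cancel haD]
    calc ((D / a : ℕ) : ZMod 3)
        = ((D / a : ℕ) : ZMod 3) * ((a : ZMod 3) * (a : ZMod 3)) := by
          rw [hsq _ ha0, mul_one]
      _ = (((D / a : ℕ) : ZMod 3) * (a : ZMod 3)) * (a : ZMod 3) := by ring
      _ = (D : ZMod 3) * (a : ZMod 3) := by rw [h1]
  have h3 : (α.num : ZMod 3) * (D : ZMod 3) = (S : ZMod 3) * (α.den : ZMod 3) := by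
    have h := congrArg (fun z : ℤ => (z : ZMod 3)) hint
    push_cast at h
    exact h
  rw [hSz] at h3
  have h4 : (α.num : ZMod 3) * (D : ZMod 3)
      = ((n : ZMod 3) * (α.den : ZMod 3)) * (D : ZMod 3) := by rw [h3]; ring
  have h5 := mul_right_cancel₀ hDz h4
  have hgoal : ((((n : ℤ) * (α.den : ℤ)) : ℤ) : ZMod 3) = ((α.num : ℤ) : ZMod 3) := by
    push_cast
    rw [h5]
  exact (ZMod.intCast_eq_intCast_iff _ _ 3).mp hgoal
end

section
/- If M is a positive integer whose largest prime divisor is 7, then either M ≤ 28, or M is divisible by at least one of 35, 42, 49, 56, 63. -/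
lemma fact_le_of_not_pow_dvd {M p k : ℕ} (hM : M ≠ 0) (hp : p.Prime)
    (h : ¬ p ^ (k + 1) ∣ M) : M.factorization p ≤ k := by
  by_contra hlt
  exact h ((Nat.Prime.pow_dvd_iff_le_factorization hp hM).mpr (by omega))

theorem largest_prime_divisor_seven (M : ℕ) (hM : 0 < M)
    (h7 : 7 ∣ M) (hsmooth : ∀ p : ℕ, p.Prime → p ∣ M → p ≤ 7) :
    M ≤ 28 ∨ 35 ∣ M ∨ 42 ∣ M ∨ 49 ∣ M ∨ 56 ∣ M ∨ 63 ∣ M := by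
  have hM0 : M ≠ 0 := hM.ne'
  by_cases h5 : 5 ∣ M
  · exact Or.inr (Or.inl ((Nat.Coprime.mul_dvd_of_dvd_of_dvd (by norm_num) h5 h7)))
  by_cases h49 : 49 ∣ M
  · tauto
  by_cases h2 : 2 ∣ M
  · by_cases h3 : 3 ∣ M
    · have h6 : 6 ∣ M := Nat.Coprime.mul_dvd_of_dvd_of_dvd (by norm_num) h2 h3
      exact Or.inr (Or.inr (Or.inl (Nat.Coprime.mul_dvd_of_dvd_of_dvd (by norm_num) h6 h7)))
    by_cases h8 : 8 ∣ M
    · exact Or.inr (Or.inr (Or.inr (Or.inr (Or.inl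
        (Nat.Coprime.mul_dvd_of_dvd_of_dvd (by norm_num) h8 h7)))))
    · left
      have hdvd : M ∣ 28 := by
        rw [← Nat.factorization_le_iff_dvd hM0 (by norm_num)]
        intro p
        by_cases hp : p.Prime
        · by_cases hpM : p ∣ M
          · have hle := hsmooth p hp hpM
            have h2p := hp.two_le
            interval_cases p
            · have : M.factorization 2 ≤ 2 := fact_le_of_not_pow_dvd hM0 hp (by norm_num [h8])
              have : 2 ≤ Nat.factorization 28 2 :=
                (Nat.Prime.pow_dvd_iff_le_factorization hp (by norm_num)).mp (by norm_num)
              omega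
            · exact absurd hpM h3
            · exact absurd hp (by norm_num)
            · exact absurd hpM h5
            · exact absurd hp (by norm_num)
            · have : M.factorization 7 ≤ 1 := fact_le_of_not_pow_dvd hM0 hp (by norm_num [h49])
              have : 1 ≤ Nat.factorization 28 7 :=
                (Nat.Prime.pow_dvd_iff_le_factorization hp (by norm_num)).mp (by norm_num)
              omega
          · simp [Nat.factorization_eq_zero_of_not_dvd hpM]
        · simp [Nat.factorization_eq_zero_of_not_prime _ hp]
      exact Nat.le_of_dvd (by norm_num) hdvd
  · by_cases h9 : 9 ∣ M
    · exact Or.inr (Or.inr (Or.inr (Or.inr (Or.inr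
        (Nat.Coprime.mul_dvd_of_dvd_of_dvd (by norm_num) h9 h7)))))
    · left
      have hdvd : M ∣ 21 := by
        rw [← Nat.factorization_le_iff_dvd hM0 (by norm_num)]
        intro p
        by_cases hp : p.Prime
        · by_cases hpM : p ∣ M
          · have hle := hsmooth p hp hpM
            have h2p := hp.two_le
            interval_cases p
            · exact absurd hpM h2
            · have : M.factorization 3 ≤ 1 := fact_le_of_not_pow_dvd hM0 hp (by norm_num [h9])
              have : 1 ≤ Nat.factorization 21 3 :=
                (Nat.Prime.pow_dvd_iff_le_factorization hp (by norm_num)).mp (by norm_num)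
              omega
            · exact absurd hp (by norm_num)
            · exact absurd hpM h5
            · exact absurd hp (by norm_num)
            · have : M.factorization 7 ≤ 1 := fact_le_of_not_pow_dvd hM0 hp (by norm_num [h49])
              have : 1 ≤ Nat.factorization 21 7 :=
                (Nat.Prime.pow_dvd_iff_le_factorization hp (by norm_num)).mp (by norm_num)
              omega
          · simp [Nat.factorization_eq_zero_of_not_dvd hpM]
        · simp [Nat.factorization_eq_zero_of_not_prime _ hp]
      exact le_trans (Nat.le_of_dvd (by norm_num) hdvd) (by norm_num)
end

section
/- Metatheorem on α-partitions: Let S be a set of positive rationals and Q a property of finite sets of positive integers. Suppose for each α ∈ S there are given l ≥ 1, positive integers m_1,...,m_l, rationals β_1,...,β_l ∈ S, and finite sets of positive integers A_1,...,A_l, satisfying: (1) β_i ∈ S; (2) for every positive integer n there is an i with n ≡ Σ A_i (mod m_i); (3) α = Σ_{a∈A_i} 1/a + β_i/m_i for all i; (4) for every β_i-partition B with property Q, A_i ∩ m_i·B = ∅; (5) for every β_i-partition B with property Q, A_i ∪ m_i·B has property Q. Suppose further X is a positive integer such that for all α ∈ S and all n with X ≤ n ≤ max_{i,α}(Σ A_i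 + m_i(X−1)), an α-partition of n with property Q exists. Then for every α ∈ S and every n ≥ X, an α-partition of n with property Q exists. -/
/-- `A` is an `α`-partition of `n`: a finite set of distinct positive integers
with element sum `n` and reciprocal sum `α`. -/
def IsPartitionOf (α : ℚ) (n : ℕ) (A : Finset ℕ) : Prop :=
  (∀ a ∈ A, 0 < a) ∧ (∑ a ∈ A, a = n) ∧ (∑ a ∈ A, (1 : ℚ) / a = α)

theorem metatheorem
    (S : Set ℚ) (hS : ∀ α ∈ S, 0 < α)
    (Q : Finset ℕ → Prop)
    (l : ℚ → ℕ) (m : ℚ → ℕ → ℕ) (β : ℚ → ℕ → ℚ) (A : ℚ → ℕ → Finset ℕ)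
    (hl : ∀ α ∈ S, 1 ≤ l α)
    (hmpos : ∀ α ∈ S, ∀ i < l α, 0 < m α i)
    (hApos : ∀ α ∈ S, ∀ i < l α, ∀ a ∈ A α i, 0 < a)
    (hAne : ∀ α ∈ S, ∀ i < l α, m α i = 1 → (A α i).Nonempty)
    (h1 : ∀ α ∈ S, ∀ i < l α, β α i ∈ S)
    (h2 : ∀ α ∈ S, ∀ n : ℕ, 0 < n →
      ∃ i < l α, n % m α i = (∑ a ∈ A α i, a) % m α i)
    (h3 : ∀ α ∈ S, ∀ i < l α,
      α = (∑ a ∈ A α i, (1 : ℚ) / a) + β α i / m α i)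
    (h4 : ∀ α ∈ S, ∀ i < l α, ∀ n' : ℕ, ∀ B : Finset ℕ,
      IsPartitionOf (β α i) n' B → Q B →
      Disjoint (A α i) (B.image fun b => m α i * b))
    (h5 : ∀ α ∈ S, ∀ i < l α, ∀ n' : ℕ, ∀ B : Finset ℕ,
      IsPartitionOf (β α i) n' B → Q B →
      Q (A α i ∪ B.image fun b => m α i * b))
    (X : ℕ) (hX : 0 < X)
    (hbase : ∀ α ∈ S, ∀ n : ℕ, X ≤ n →
      (∃ α' ∈ S, ∃ j < l α', n ≤ (∑ a ∈ A α' j, a) + m α' j * (X - 1)) →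
      ∃ B : Finset ℕ, IsPartitionOf α n B ∧ Q B) :
    ∀ α ∈ S, ∀ n : ℕ, X ≤ n → ∃ B : Finset ℕ, IsPartitionOf α n B ∧ Q B := by
  intro α hα n
  induction n using Nat.strong_induction_on generalizing α with
  | _ n ih =>
  intro hn
  by_cases hcase : ∃ α' ∈ S, ∃ j < l α', n ≤ (∑ a ∈ A α' j, a) + m α' j * (X - 1)
  · exact hbase α hα n hn hcase
  · push_neg at hcase
    obtain ⟨i, hi, hmod⟩ := h2 α hα n (lt_of_lt_of_le hX hn)
    set s := ∑ a ∈ A α i, a with hs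
    have hm := hmpos α hα i hi
    have hgt : s + m α i * (X - 1) < n := hcase α hα i hi
    have hs_le : s ≤ n := by omega
    have hdvd : m α i ∣ (n - s) := (Nat.modEq_iff_dvd' hs_le).mp hmod.symm
    set n' := (n - s) / m α i with hn'
    have heq : m α i * n' = n - s := Nat.mul_div_cancel' hdvd
    have hn'X : X ≤ n' := by
      have h1' : m α i * (X - 1) < m α i * n' := by rw [heq]; omega
      have := Nat.lt_of_mul_lt_mul_left h1'
      omega
    have hn'lt : n' < n := by
      rcases Nat.lt_or_ge (m α i) 2 with hm2 | hm2
      · have hm1 : m α i = 1 := by omega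
        obtain ⟨a, ha⟩ := hAne α hα i hi hm1
        have := hApos α hα i hi a ha
        have hsa : a ≤ s := Finset.single_le_sum (fun b _ => Nat.zero_le b) ha
        have hn'' : n' = n - s := by rw [hn', hm1, Nat.div_one]
        omega
      · have h3' : 2 * n' ≤ n - s := by
          rw [← heq]; exact Nat.mul_le_mul_right n' hm2
        omega
    obtain ⟨B, hB, hQB⟩ := ih n' hn'lt (β α i) (h1 α hα i hi) hn'X
    obtain ⟨hBpos, hBsum, hBrec⟩ := hB
    have hinj : Set.InjOn (fun b => m α i * b) B := by
      intro x _ y _ hxy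
      exact Nat.eq_of_mul_eq_mul_left hm hxy
    have hdisj := h4 α hα i hi n' B ⟨hBpos, hBsum, hBrec⟩ hQB
    refine ⟨A α i ∪ B.image fun b => m α i * b, ⟨?_, ?_, ?_⟩,
      h5 α hα i hi n' B ⟨hBpos, hBsum, hBrec⟩ hQB⟩
    · intro a ha
      rcases Finset.mem_union.mp ha with h | h
      · exact hApos α hα i hi a h
      · obtain ⟨b, hb, rfl⟩ := Finset.mem_image.mp h
        exact Nat.mul_pos hm (hBpos b hb)
    · rw [Finset.sum_union hdisj, Finset.sum_image hinj, ← Finset.mul_sum, hBsum]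
      omega
    · rw [Finset.sum_union hdisj, Finset.sum_image hinj]
      have : ∑ b ∈ B, (1 : ℚ) / ((m α i : ℕ) * b : ℕ)
          = ∑ b ∈ B, (1 / (m α i : ℚ)) * (1 / (b : ℚ)) := by
        apply Finset.sum_congr rfl
        intro b hb
        push_cast
        rw [one_div_mul_one_div]
      rw [this, ← Finset.mul_sum, hBrec]
      conv_rhs => rw [h3 α hα i hi]
      ring
end
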